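/- The logistic map f₄(x) = 4x(1−x) is ergodic with respect to the probability measure μ₄ on ℝ with density ρ₄(x) = (1/π)·(x(1−x))^(−1/2) on (0,1): f₄ is μ₄-measure-preserving and every Borel set A with f₄⁻¹(A) = A (up to μ₄-null sets) has μ₄(A) = 0 or μ₄(A) = 1. -/

import Mathlib

open MeasureTheory Real
open Set

/-- The logistic map `f₄`. -/
noncomputable def f4 (x : ℝ) : ℝ := 4 * x * (1 - x)

/-- Invariant density of the ergodic logistic map `f₄`. -/
noncomputable def rho4 (x : ℝ) : ℝ := (1 / Real.pi) * (x * (1 - x)) ^ (-(1:ℝ)/2)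

/-- The measure on `ℝ` given by Lebesgue measure restricted to `(0,1)` with density `rho4`. -/
noncomputable def mu4 : Measure ℝ :=
  (volume.restrict (Set.Ioo (0:ℝ) 1)).withDensity fun x => ENNReal.ofReal (rho4 x)

noncomputable def hmap (θ : ℝ) : ℝ := Real.sin (Real.pi * θ) ^ 2

lemma hmap_periodic : Function.Periodic hmap 1 := by
  intro x
  simp [hmap, mul_add, Real.sin_add_pi]

lemma hmap_hasDerivAt (θ : ℝ) :
    HasDerivAt hmap (Real.pi * Real.sin (2 * (Real.pi * θ))) θ := by
  have h1 : HasDerivAt (fun θ : ℝ => Real.sin (Real.pi * θ))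
      (Real.cos (Real.pi * θ) * Real.pi) θ := by
    have h := (Real.hasDerivAt_sin (Real.pi * θ)).comp θ
      ((hasDerivAt_id θ).const_mul Real.pi)
    rw [mul_one] at h
    exact h
  have := h1.pow 2
  exact this.congr_deriv (by rw [Real.sin_two_mul]; norm_num; ring)

lemma hmap_semiconj (θ : ℝ) : f4 (hmap θ) = hmap (2 * θ) := by
  have : Real.sin (Real.pi * (2 * θ)) = 2 * Real.sin (Real.pi * θ) * Real.cos (Real.pi * θ) := by
    rw [show Real.pi * (2 * θ) = 2 * (Real.pi * θ) by ring, Real.sin_two_mul]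
  rw [f4, hmap, hmap, this]
  have hc := Real.sin_sq_add_cos_sq (Real.pi * θ)
  nlinarith [hc]

lemma hmap_reflect (θ : ℝ) : hmap (1 - θ) = hmap θ := by
  simp [hmap, mul_sub, mul_one, Real.sin_pi_sub]

lemma hmap_injOn : Set.InjOn hmap (Set.Ioo 0 (1/2 : ℝ)) := by
  intro a ha b hb hab
  have hpi := Real.pi_pos
  have hmem : ∀ x : ℝ, x ∈ Set.Ioo 0 (1/2 : ℝ) →
      Real.pi * x ∈ Set.Icc (-(Real.pi/2)) (Real.pi/2) := by
    intro x hx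
    constructor
    · nlinarith [hx.1]
    · nlinarith [hx.2]
  have hsa : 0 < Real.sin (Real.pi * a) :=
    Real.sin_pos_of_pos_of_lt_pi (by nlinarith [ha.1]) (by nlinarith [ha.2])
  have hsb : 0 < Real.sin (Real.pi * b) :=
    Real.sin_pos_of_pos_of_lt_pi (by nlinarith [hb.1]) (by nlinarith [hb.2])
  have : Real.sin (Real.pi * a) = Real.sin (Real.pi * b) := by
    have := hab
    rw [hmap, hmap] at this
    nlinarith [this, hsa, hsb]
  have := Real.injOn_sin (hmem a ha) (hmem b hb) this
  field_simp at this
  exact this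

lemma hmap_image : hmap '' (Set.Ioo 0 (1/2 : ℝ)) = Set.Ioo 0 1 := by
  have hpi := Real.pi_pos
  ext x
  constructor
  · rintro ⟨θ, hθ, rfl⟩
    have hs : 0 < Real.sin (Real.pi * θ) :=
      Real.sin_pos_of_pos_of_lt_pi (by nlinarith [hθ.1]) (by nlinarith [hθ.2])
    have hs1 : Real.sin (Real.pi * θ) < 1 := by
      have : Real.pi * θ < Real.pi / 2 := by nlinarith [hθ.2]
      have h2 : Real.pi * θ ∈ Set.Ico (-(Real.pi/2)) (Real.pi/2) := ⟨by nlinarith [hθ.1], this⟩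
      calc Real.sin (Real.pi * θ) < Real.sin (Real.pi/2) :=
            Real.strictMonoOn_sin ⟨h2.1, le_of_lt h2.2⟩
              ⟨by linarith [Real.pi_pos], le_refl _⟩ h2.2
        _ = 1 := Real.sin_pi_div_two
    rw [hmap]
    exact ⟨by positivity, by nlinarith⟩
  · rintro ⟨hx0, hx1⟩
    refine ⟨Real.arcsin (Real.sqrt x) / Real.pi, ⟨?_, ?_⟩, ?_⟩
    · have : 0 < Real.arcsin (Real.sqrt x) := Real.arcsin_pos.2 (Real.sqrt_pos.2 hx0)
      positivity
    · have hsx : Real.sqrt x < 1 := by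
        rw [show (1:ℝ) = Real.sqrt 1 by simp]
        exact Real.sqrt_lt_sqrt (le_of_lt hx0) hx1
      have hlt : Real.arcsin (Real.sqrt x) < Real.pi / 2 :=
        Real.arcsin_lt_pi_div_two.2 hsx
      rw [div_lt_iff₀ hpi]
      nlinarith
    · have hsx : Real.sqrt x ≤ 1 := by
        rw [show (1:ℝ) = Real.sqrt 1 by simp]
        exact Real.sqrt_le_sqrt (le_of_lt hx1)
      rw [hmap, mul_div_cancel₀ _ (ne_of_gt hpi),
        Real.sin_arcsin (by linarith [Real.sqrt_nonneg x]) hsx, Real.sq_sqrt (le_of_lt hx0)]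

lemma hmap_continuous : Continuous hmap :=
  (Real.continuous_sin.comp (continuous_const.mul continuous_id)).pow 2

lemma hmap_measurable : Measurable hmap := hmap_continuous.measurable

lemma density_key {θ : ℝ} (h1 : 0 < θ) (h2 : θ < 1) (hne : θ ≠ 1/2) :
    |Real.pi * Real.sin (2 * (Real.pi * θ))| * rho4 (hmap θ) = 2 := by
  have hpi := Real.pi_pos
  set s := Real.sin (Real.pi * θ) with hs_def
  set c := Real.cos (Real.pi * θ) with hc_def
  have hs : 0 < s := Real.sin_pos_of_pos_of_lt_pi (by nlinarith) (by nlinarith)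
  have hc : c ≠ 0 := by
    rcases lt_or_gt_of_ne hne with h | h
    · exact ne_of_gt (Real.cos_pos_of_mem_Ioo ⟨by nlinarith, by nlinarith⟩)
    · exact ne_of_lt (Real.cos_neg_of_pi_div_two_lt_of_lt (by nlinarith) (by nlinarith))
  have ht : s * c ≠ 0 := mul_ne_zero (ne_of_gt hs) hc
  have habs : (0:ℝ) < |s * c| := abs_pos.2 ht
  have hcsq : c ^ 2 = 1 - s ^ 2 := Real.cos_sq' (Real.pi * θ)
  have hx : hmap θ * (1 - hmap θ) = (s * c) ^ 2 := by
    rw [hmap, ← hs_def]; nlinarith [hcsq]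
  have hrpow : ((s * c) ^ 2 : ℝ) ^ (-(1:ℝ)/2) = |s * c|⁻¹ := by
    rw [← sq_abs, ← Real.rpow_natCast |s * c| 2, ← Real.rpow_mul (abs_nonneg _)]
    norm_num
    rw [Real.rpow_neg_one]
    ring
  have hsin2 : Real.sin (2 * (Real.pi * θ)) = 2 * (s * c) := by
    rw [Real.sin_two_mul]; ring
  rw [rho4, hx, hrpow, hsin2, abs_mul, abs_mul, abs_of_pos hpi,
    abs_of_pos (by norm_num : (0:ℝ) < 2)]
  field_simp

lemma map_hmap : Measure.map hmap (volume.restrict (Set.Ioc 0 1)) = mu4 := by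
  refine Measure.ext fun A hA => ?_
  rw [Measure.map_apply hmap_measurable hA, Measure.restrict_apply (hmap_measurable hA)]
  set S := hmap ⁻¹' A with hS_def
  have hSm : MeasurableSet S := hmap_measurable hA
  -- replace Ioc 0 1 by the two open halves
  have hae : (Set.Ioc (0:ℝ) 1 : Set ℝ) =ᵐ[volume]
      (Set.Ioo (0:ℝ) (1/2) ∪ Set.Ioo (1/2:ℝ) 1 : Set ℝ) := by
    rw [← measure_symmDiff_eq_zero_iff]
    refine measure_mono_null (fun x hx => ?_) (Set.Finite.measure_zero
      ((Set.finite_singleton (1:ℝ)).insert (1/2:ℝ)) volume)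
    rcases hx with ⟨hx1, hx2⟩ | ⟨hx1, hx2⟩
    · simp only [Set.mem_union, Set.mem_Ioo, not_or, not_and, not_lt] at hx2
      rcases hx1 with ⟨h0, h1⟩
      rcases le_or_gt x (1/2) with h | h
      · left; linarith [hx2.1 h0]
      · right; simp only [Set.mem_singleton_iff]; linarith [hx2.2 h]
    · exfalso
      rcases hx1 with ⟨h0, h1⟩ | ⟨h0, h1⟩ <;> exact hx2 ⟨by linarith, by linarith⟩
  have hsplit : volume (S ∩ Set.Ioc 0 1)
      = volume (S ∩ Set.Ioo 0 (1/2)) + volume (S ∩ Set.Ioo (1/2) 1) := by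
    rw [measure_congr ((Filter.EventuallyEq.refl _ S).inter hae), Set.inter_union_distrib_left]
    refine measure_union ?_ (hSm.inter measurableSet_Ioo)
    exact (Set.disjoint_left.2 fun x hx hx' => absurd hx'.1 (lt_asymm hx.2)).mono
      Set.inter_subset_right Set.inter_subset_right
  -- reflection gives equality of the two halves
  have hrefl : volume (S ∩ Set.Ioo (1/2) 1) = volume (S ∩ Set.Ioo 0 (1/2)) := by
    have hmp : MeasurePreserving (fun t : ℝ => 1 - t) volume volume :=
      Measure.measurePreserving_sub_left volume 1
    have := hmp.measure_preimage
      (s := S ∩ Set.Ioo (1/2 : ℝ) 1) ((hSm.inter measurableSet_Ioo).nullMeasurableSet)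
    rw [← this]
    congr 1
    ext x
    simp only [Set.mem_preimage, Set.mem_inter_iff, Set.mem_Ioo, hS_def, hmap_reflect]
    constructor
    · rintro ⟨h1, h2, h3⟩; exact ⟨h1, by linarith, by linarith⟩
    · rintro ⟨h1, h2, h3⟩; exact ⟨h1, by linarith, by linarith⟩
  -- change of variables on the left half
  have hmeas1 : MeasurableSet (S ∩ Set.Ioo (0:ℝ) (1/2)) := hSm.inter measurableSet_Ioo
  have hinj : Set.InjOn hmap (S ∩ Set.Ioo (0:ℝ) (1/2)) :=
    hmap_injOn.mono Set.inter_subset_right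
  have hderiv : ∀ x ∈ S ∩ Set.Ioo (0:ℝ) (1/2),
      HasFDerivWithinAt hmap
        ((1 : ℝ →L[ℝ] ℝ).smulRight (Real.pi * Real.sin (2 * (Real.pi * x))))
        (S ∩ Set.Ioo (0:ℝ) (1/2)) x :=
    fun x _ => (hmap_hasDerivAt x).hasFDerivAt.hasFDerivWithinAt
  have hcov := lintegral_image_eq_lintegral_abs_det_fderiv_mul volume hmeas1 hderiv hinj
      (fun x => ENNReal.ofReal (rho4 x))
  have himg : hmap '' (S ∩ Set.Ioo (0:ℝ) (1/2)) = Set.Ioo (0:ℝ) 1 ∩ A := by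
    rw [hS_def, Set.inter_comm, Set.image_inter_preimage, hmap_image]
  rw [himg] at hcov
  have hmu : mu4 A = ∫⁻ x in Set.Ioo (0:ℝ) 1 ∩ A, ENNReal.ofReal (rho4 x) := by
    rw [mu4, withDensity_apply _ hA, Measure.restrict_restrict hA, Set.inter_comm]
  have hconst : ∫⁻ x in S ∩ Set.Ioo (0:ℝ) (1/2),
      ENNReal.ofReal |((1 : ℝ →L[ℝ] ℝ).smulRight (Real.pi * Real.sin (2 * (Real.pi * x)))).det|
        * ENNReal.ofReal (rho4 (hmap x)) = 2 * volume (S ∩ Set.Ioo (0:ℝ) (1/2)) := by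
    rw [← setLIntegral_const]
    refine setLIntegral_congr_fun hmeas1 (fun x hx => ?_)
    rw [ContinuousLinearMap.det_smulRight, ContinuousLinearMap.one_apply, one_mul, ← ENNReal.ofReal_mul (abs_nonneg _),
      density_key hx.2.1 (by linarith [hx.2.2]) (ne_of_lt hx.2.2)]
    norm_num
  rw [hsplit, hrefl, ← two_mul, hmu, hcov, hconst]

noncomputable def Gmap : AddCircle (1:ℝ) → ℝ := hmap_periodic.lift

lemma Gmap_coe (θ : ℝ) : Gmap (θ : AddCircle (1:ℝ)) = hmap θ :=
  hmap_periodic.lift_coe θ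

lemma Gmap_continuous : Continuous Gmap := by
  rw [QuotientAddGroup.isOpenQuotientMap_mk.isQuotientMap.continuous_iff]
  exact hmap_continuous

lemma Gmap_measurable : Measurable Gmap := Gmap_continuous.measurable

lemma map_Gmap : Measure.map Gmap (volume : Measure (AddCircle (1:ℝ))) = mu4 := by
  rw [← (AddCircle.measurePreserving_mk 1 0).map_eq,
    Measure.map_map Gmap_measurable (AddCircle.measurable_mk' (a := (1:ℝ)))]
  have : Gmap ∘ ((↑) : ℝ → AddCircle (1:ℝ)) = hmap := funext Gmap_coe
  rw [this, show (0:ℝ) + 1 = 1 by norm_num, map_hmap]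

lemma Gmap_semiconj (y : AddCircle (1:ℝ)) : Gmap ((2:ℕ) • y) = f4 (Gmap y) := by
  induction y using QuotientAddGroup.induction_on with
  | H θ =>
    have : ((2:ℕ) • (θ : AddCircle (1:ℝ))) = (((2 * θ : ℝ)) : AddCircle (1:ℝ)) := by
      rw [two_nsmul, two_mul]
      norm_cast
    rw [this, Gmap_coe, Gmap_coe, hmap_semiconj]

lemma f4_measurable : Measurable f4 := by
  have : Continuous f4 := by
    unfold f4; continuity
  exact this.measurable

theorem f4_ergodic_wrt_mu4 :
    MeasurePreserving f4 mu4 mu4 ∧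
    ∀ A : Set ℝ, MeasurableSet A → mu4 (symmDiff (f4 ⁻¹' A) A) = 0 →
      mu4 A = 0 ∨ mu4 A = 1 := by
  have herg : Ergodic (fun y : AddCircle (1:ℝ) => (2:ℕ) • y) volume :=
    AddCircle.ergodic_nsmul one_lt_two
  have hG : MeasurePreserving Gmap (volume : Measure (AddCircle (1:ℝ))) mu4 :=
    ⟨Gmap_measurable, map_Gmap⟩
  have hcomp : f4 ∘ Gmap = Gmap ∘ (fun y : AddCircle (1:ℝ) => (2:ℕ) • y) :=
    funext fun y => (Gmap_semiconj y).symm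
  constructor
  · refine ⟨f4_measurable, ?_⟩
    rw [← map_Gmap, Measure.map_map f4_measurable Gmap_measurable, hcomp,
      ← Measure.map_map Gmap_measurable herg.toMeasurePreserving.measurable,
      herg.toMeasurePreserving.map_eq, map_Gmap]
  · intro A hAm hA0
    set B := Gmap ⁻¹' A with hB_def
    have hBm : MeasurableSet B := Gmap_measurable hAm
    have hpre : (fun y : AddCircle (1:ℝ) => (2:ℕ) • y) ⁻¹' B = Gmap ⁻¹' (f4 ⁻¹' A) := by
      ext y
      simp [hB_def, Gmap_semiconj]
    have hzero : volume (symmDiff ((fun y : AddCircle (1:ℝ) => (2:ℕ) • y) ⁻¹' B) B) = 0 := by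
      rw [hpre, hB_def, ← Set.preimage_symmDiff]
      rw [hG.measure_preimage ((f4_measurable hAm).symmDiff hAm).nullMeasurableSet]
      exact hA0
    have hae := herg.quasiErgodic.ae_empty_or_univ₀ hBm.nullMeasurableSet
      (measure_symmDiff_eq_zero_iff.mp hzero)
    have hAB : mu4 A = volume B := (hG.measure_preimage hAm.nullMeasurableSet).symm
    rcases hae with hB | hB
    · left
      rw [hAB, measure_congr hB, measure_empty]
    · right
      rw [hAB, measure_congr hB]
      simpa using AddCircle.measure_univ (T := (1:ℝ))
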